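/- If X ~ Gamma(α, λ) and, independently, η ~ Beta(βα, (1-β)α) with 0 < β < 1, then ηX ~ Gamma(βα, λ). -/

import Mathlib

open MeasureTheory Real ProbabilityTheory Set

/-- The Beta(a,b) distribution on ℝ, with density
x^(a-1)(1-x)^(b-1)·Γ(a+b)/(Γ(a)Γ(b)) on (0,1). -/
noncomputable def betaMeasure' (a b : ℝ) : Measure ℝ :=
  volume.withDensity fun x =>
    ENNReal.ofReal
      (if x ∈ Set.Ioo (0:ℝ) 1 then
        x ^ (a - 1) * (1 - x) ^ (b - 1) * Gamma (a + b) / (Gamma a * Gamma b)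
      else 0)


lemma lintegral_image_eq_lintegral_abs_deriv_mul {s : Set ℝ} {f f' : ℝ → ℝ}
    (hs : MeasurableSet s) (hf' : ∀ x ∈ s, HasDerivWithinAt f (f' x) s x)
    (hf : Set.InjOn f s) (g : ℝ → ENNReal) :
    ∫⁻ x in f '' s, g x = ∫⁻ x in s, ENNReal.ofReal |f' x| * g (f x) := by
  simpa only [ContinuousLinearMap.det_toSpanSingleton] using
    MeasureTheory.lintegral_image_eq_lintegral_abs_det_fderiv_mul volume hs
      (fun x hx => (hf' x hx).hasFDerivWithinAt) hf g


lemma gamma_lintegral (b r : ℝ) (hb : 0 < b) (hr : 0 < r) :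
    ∫⁻ x in Set.Ioi (0:ℝ), ENNReal.ofReal (x ^ (b-1) * exp (-(r * x)))
      = ENNReal.ofReal (Gamma b / r ^ b) := by
  have h1 := lintegral_gammaPDF_eq_one hb hr
  have hmeas : Measurable fun x : ℝ => ENNReal.ofReal (x ^ (b-1) * exp (-(r * x))) := by
    fun_prop
  have hsplit : (1:ENNReal) = ∫⁻ x in Set.Ioi (0:ℝ), gammaPDF b r x := by
    rw [← h1, ← lintegral_add_compl (gammaPDF b r) (measurableSet_Ici (a := (0:ℝ))),
      Set.compl_Ici]
    have h0 : ∫⁻ x in Set.Iio (0:ℝ), gammaPDF b r x = 0 := by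
      rw [setLIntegral_congr_fun measurableSet_Iio
        (fun x (hx : x < 0) => gammaPDF_of_neg hx), lintegral_zero]
    rw [h0, add_zero, ← MeasureTheory.restrict_Ioi_eq_restrict_Ici]
  have h2 : ∫⁻ x in Set.Ioi (0:ℝ), gammaPDF b r x
      = ENNReal.ofReal (r ^ b / Gamma b) *
        ∫⁻ x in Set.Ioi (0:ℝ), ENNReal.ofReal (x ^ (b-1) * exp (-(r * x))) := by
    rw [← lintegral_const_mul _ hmeas]
    apply setLIntegral_congr_fun measurableSet_Ioi
    refine fun x (hx : 0 < x) => ?_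
    rw [gammaPDF_of_nonneg hx.le, mul_assoc, ENNReal.ofReal_mul (by positivity)]
  have hc : (0:ℝ) < r ^ b / Gamma b := by
    have := Real.Gamma_pos_of_pos hb
    positivity
  rw [h2] at hsplit
  have := hsplit.symm
  rw [← ENNReal.eq_div_iff (by simp [ENNReal.ofReal_eq_zero, not_le, hc]) 
    (by simp)] at this
  rw [this, ENNReal.div_eq_inv_mul, mul_one, ← ENNReal.ofReal_inv_of_pos hc, inv_div]

lemma key_identity (a b r y v : ℝ) (ha : 0 < a) (hb : 0 < b) (hy : 0 < y) (hv : 0 < v) :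
    (y / (y+v)^2) *
      ((y/(y+v)) ^ (a-1) * (1 - y/(y+v)) ^ (b-1) * Gamma (a+b) / (Gamma a * Gamma b) *
        (1/(y/(y+v))) *
        (r ^ (a+b) / Gamma (a+b) * (y/(y/(y+v))) ^ (a+b-1) * exp (-(r * (y/(y/(y+v)))))))
    = (r ^ (a+b) / (Gamma a * Gamma b) * y ^ (a-1) * exp (-(r*y))) * (v ^ (b-1) * exp (-(r*v))) := by
  have hz : 0 < y + v := by linarith
  have hΓa := Real.Gamma_pos_of_pos ha
  have hΓb := Real.Gamma_pos_of_pos hb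
  have hΓab := Real.Gamma_pos_of_pos (by linarith : (0:ℝ) < a + b)
  have h1 : y / (y / (y + v)) = y + v := by field_simp
  have h2 : 1 - y / (y + v) = v / (y + v) := by field_simp; ring
  rw [h1, h2]
  rw [Real.div_rpow hy.le hz.le, Real.div_rpow hv.le hz.le]
  rw [show -(r * (y + v)) = -(r * y) + -(r * v) by ring, Real.exp_add]
  rw [show a + b - 1 = (a - 1) + ((b - 1) + 1) by ring, Real.rpow_add hz, Real.rpow_add hz,
    Real.rpow_one]
  have hza : (0:ℝ) < (y+v) ^ (a-1) := Real.rpow_pos_of_pos hz _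
  have hzb : (0:ℝ) < (y+v) ^ (b-1) := Real.rpow_pos_of_pos hz _
  field_simp


lemma gammaMeasure_apply_eq (c r : ℝ) {A : Set ℝ} (hA : MeasurableSet A) :
    gammaMeasure c r A = ∫⁻ x in Ioi 0, A.indicator (fun _ => (1:ENNReal)) x * gammaPDF c r x := by
  have h1 : ∀ x, A.indicator (fun _ => (1:ENNReal)) x * gammaPDF c r x
      = A.indicator (gammaPDF c r) x := by
    intro x
    by_cases h : x ∈ A <;> simp [h]
  simp_rw [h1]
  rw [lintegral_indicator hA _, Measure.restrict_restrict hA,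
    gammaMeasure, withDensity_apply _ hA]
  -- goal: ∫⁻ x in A, pdf = ∫⁻ x in A ∩ Ioi 0, pdf
  have hsplit : A = (A ∩ Ioi 0) ∪ (A ∩ Iic 0) := by
    ext x
    constructor
    · intro hx
      rcases lt_or_ge 0 x with h | h
      · exact Or.inl ⟨hx, h⟩
      · exact Or.inr ⟨hx, h⟩
    · rintro (⟨hx, -⟩ | ⟨hx, -⟩) <;> exact hx
  nth_rewrite 1 [hsplit]
  rw [lintegral_union (hA.inter measurableSet_Iic)
    (Set.disjoint_left.mpr (fun x hx hx' => (not_lt.mpr (hx'.2 : x ≤ 0)) (hx.2 : (0:ℝ) < x)))]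
  have hzero : ∫⁻ x in A ∩ Iic 0, gammaPDF c r x = 0 := by
    have hle : ∫⁻ x in A ∩ Iic 0, gammaPDF c r x ≤ ∫⁻ x in Iic 0, gammaPDF c r x :=
      lintegral_mono_set Set.inter_subset_right
    have : ∫⁻ x in Iic 0, gammaPDF c r x = 0 := by
      rw [← MeasureTheory.restrict_Iio_eq_restrict_Iic,
        setLIntegral_congr_fun measurableSet_Iio
          (fun x (hx : x < 0) => gammaPDF_of_neg hx), lintegral_zero]
    exact le_antisymm (this ▸ hle) zero_le
  rw [hzero, add_zero]


lemma inner_integral (a b r y : ℝ) (ha : 0 < a) (hb : 0 < b) (hr : 0 < r) (hy : 0 < y) :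
    ∫⁻ u in Ioo (0:ℝ) 1,
      ENNReal.ofReal (u ^ (a-1) * (1-u) ^ (b-1) * Gamma (a+b) / (Gamma a * Gamma b))
        * ENNReal.ofReal (1/u) * gammaPDF (a+b) r (y/u)
      = gammaPDF a r y := by
  have hab : (0:ℝ) < a + b := by linarith
  have hΓa := Real.Gamma_pos_of_pos ha
  have hΓb := Real.Gamma_pos_of_pos hb
  have hΓab := Real.Gamma_pos_of_pos hab
  set f : ℝ → ℝ := fun v => y / (y + v) with hf
  -- image
  have himg : f '' Ioi 0 = Ioo (0:ℝ) 1 := by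
    ext z
    constructor
    · rintro ⟨v, hv, rfl⟩
      have hv : (0:ℝ) < v := hv
      have hz : 0 < y + v := by linarith
      exact ⟨div_pos hy hz, (div_lt_one hz).mpr (by linarith)⟩
    · rintro ⟨hz0, hz1⟩
      refine ⟨y / z - y, ?_, ?_⟩
      · have : y < y / z := by
          rw [lt_div_iff₀ hz0]; nlinarith
        simpa [Set.mem_Ioi] using by linarith
      · show y / (y + (y / z - y)) = z
        rw [show y + (y / z - y) = y / z by ring]
        field_simp
  -- derivative
  have hderiv : ∀ v ∈ Ioi (0:ℝ), HasDerivWithinAt f (-(y / (y + v)^2)) (Ioi 0) v := by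
    intro v hv
    have hv : (0:ℝ) < v := hv
    have hz : y + v ≠ 0 := by positivity
    have h1 : HasDerivAt (fun v : ℝ => y + v) 1 v := (hasDerivAt_id v).const_add y
    have h2 : HasDerivAt (fun v : ℝ => (y + v)⁻¹) (-1 / (y+v)^2) v := h1.inv hz
    have h3 : HasDerivAt f (y * (-1 / (y+v)^2)) v := by
      simpa [hf, div_eq_mul_inv] using h2.const_mul y
    have : y * (-1 / (y+v)^2) = -(y / (y+v)^2) := by ring
    rw [this] at h3
    exact h3.hasDerivWithinAt
  -- injectivity
  have hinj : Set.InjOn f (Ioi 0) := by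
    intro v1 h1 v2 h2 heq
    have h1 : (0:ℝ) < v1 := h1
    have h2 : (0:ℝ) < v2 := h2
    have hz1 : (0:ℝ) < y + v1 := by linarith
    have hz2 : (0:ℝ) < y + v2 := by linarith
    rw [hf] at heq
    simp only [div_eq_div_iff hz1.ne' hz2.ne'] at heq
    nlinarith [heq]
  rw [← himg, _root_.lintegral_image_eq_lintegral_abs_deriv_mul measurableSet_Ioi hderiv hinj]
  have hcongr : ∀ v ∈ Ioi (0:ℝ),
      ENNReal.ofReal |(-(y / (y + v)^2))| *
        (ENNReal.ofReal ((f v) ^ (a-1) * (1-(f v)) ^ (b-1) * Gamma (a+b) / (Gamma a * Gamma b))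
          * ENNReal.ofReal (1/(f v)) * gammaPDF (a+b) r (y/(f v)))
      = ENNReal.ofReal ((r ^ (a+b) / (Gamma a * Gamma b) * y ^ (a-1) * exp (-(r*y)))
          * (v ^ (b-1) * exp (-(r*v)))) := by
    intro v hv
    have hv : (0:ℝ) < v := hv
    have hz : (0:ℝ) < y + v := by linarith
    have hfv : 0 < f v := div_pos hy hz
    have h1f : 0 < 1 - f v := by
      have : f v < 1 := (div_lt_one hz).mpr (by linarith)
      linarith
    have hyfv : 0 < y / f v := div_pos hy hfv
    have habs : 0 < y / (y + v)^2 := div_pos hy (by positivity)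
    have hc0 : 0 ≤ f v ^ (a-1) * (1 - f v) ^ (b-1) * Gamma (a+b) / (Gamma a * Gamma b) :=
      div_nonneg (mul_nonneg (mul_nonneg (Real.rpow_nonneg hfv.le _)
        (Real.rpow_nonneg h1f.le _)) hΓab.le) (mul_nonneg hΓa.le hΓb.le)
    have hc1 : 0 ≤ f v ^ (a-1) * (1 - f v) ^ (b-1) * Gamma (a+b) / (Gamma a * Gamma b)
        * (1 / f v) := mul_nonneg hc0 (one_div_nonneg.mpr hfv.le)
    rw [gammaPDF_of_nonneg hyfv.le, abs_neg, abs_of_pos habs,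
      ← ENNReal.ofReal_mul hc0, ← ENNReal.ofReal_mul hc1, ← ENNReal.ofReal_mul habs.le,
      ← key_identity a b r y v ha hb hy hv]
  rw [setLIntegral_congr_fun measurableSet_Ioi hcongr]
  have hK : (0:ℝ) ≤ r ^ (a+b) / (Gamma a * Gamma b) * y ^ (a-1) * exp (-(r*y)) := by positivity
  simp_rw [ENNReal.ofReal_mul hK]
  rw [lintegral_const_mul' _ _ ENNReal.ofReal_ne_top, gamma_lintegral b r hb hr,
    ← ENNReal.ofReal_mul hK, gammaPDF_of_nonneg hy.le]
  congr 1
  have hrb : (0:ℝ) < r ^ b := Real.rpow_pos_of_pos hr _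
  rw [Real.rpow_add hr]
  field_simp

lemma beta_gamma_core (a b r : ℝ) (ha : 0 < a) (hb : 0 < b) (hr : 0 < r) :
    ((betaMeasure' a b).prod (gammaMeasure (a + b) r)).map (fun p : ℝ × ℝ => p.1 * p.2)
      = gammaMeasure a r := by
  have hab : (0:ℝ) < a + b := by linarith
  have : IsProbabilityMeasure (gammaMeasure (a+b) r) := isProbabilityMeasure_gammaMeasure hab hr
  ext s hs
  have hmul : Measurable (fun p : ℝ × ℝ => p.1 * p.2) := measurable_fst.mul measurable_snd
  set t : Set (ℝ × ℝ) := (fun p : ℝ × ℝ => p.1 * p.2) ⁻¹' s with ht_def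
  have ht : MeasurableSet t := hmul hs
  rw [Measure.map_apply hmul hs, Measure.prod_apply ht]
  set G : ℝ → ENNReal := fun u => gammaMeasure (a+b) r (Prod.mk u ⁻¹' t) with hG_def
  have hGmeas : Measurable G := measurable_measure_prodMk_left ht
  have hcmeas : Measurable fun u : ℝ =>
      ENNReal.ofReal (u ^ (a-1) * (1-u) ^ (b-1) * Gamma (a+b) / (Gamma a * Gamma b)) := by
    fun_prop
  have hfmeas : Measurable fun u : ℝ => ENNReal.ofReal
      (if u ∈ Set.Ioo (0:ℝ) 1 then
        u ^ (a - 1) * (1 - u) ^ (b - 1) * Gamma (a + b) / (Gamma a * Gamma b) else 0) := by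
    apply Measurable.ennreal_ofReal
    apply Measurable.ite measurableSet_Ioo _ measurable_const
    fun_prop
  rw [betaMeasure', lintegral_withDensity_eq_lintegral_mul _ hfmeas hGmeas]
  have hind : ∀ u : ℝ, (fun u => ENNReal.ofReal
      (if u ∈ Set.Ioo (0:ℝ) 1 then
        u ^ (a - 1) * (1 - u) ^ (b - 1) * Gamma (a + b) / (Gamma a * Gamma b) else 0) * G u) u
      = (Ioo (0:ℝ) 1).indicator
        (fun u => ENNReal.ofReal (u ^ (a-1) * (1-u) ^ (b-1) * Gamma (a+b)
          / (Gamma a * Gamma b)) * G u) u := by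
    intro u
    by_cases h : u ∈ Ioo (0:ℝ) 1 <;> simp [h]
  simp only [Pi.mul_apply]
  rw [lintegral_congr hind, lintegral_indicator measurableSet_Ioo _]
  -- compute G u on Ioo 0 1
  have hG : ∀ u ∈ Ioo (0:ℝ) 1, G u
      = ∫⁻ y in Ioi 0, ENNReal.ofReal (1/u)
          * (s.indicator (fun _ => (1:ENNReal)) y * gammaPDF (a+b) r (y/u)) := by
    intro u hu
    have hu0 : (0:ℝ) < u := hu.1
    have hA : (Prod.mk u ⁻¹' t) = (fun x : ℝ => u * x) ⁻¹' s := rfl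
    have hAmeas : MeasurableSet ((fun x : ℝ => u * x) ⁻¹' s) := (measurable_const_mul u) hs
    rw [hG_def]
    simp only [hA]
    rw [gammaMeasure_apply_eq _ _ hAmeas]
    -- change of variables x = y / u
    have himg : (fun y : ℝ => y / u) '' Ioi 0 = Ioi 0 := by
      ext z
      constructor
      · rintro ⟨x, hx, rfl⟩
        exact div_pos hx hu0
      · intro hz
        exact ⟨z * u, mul_pos hz hu0, by field_simp⟩
    have hderiv : ∀ x ∈ Ioi (0:ℝ), HasDerivWithinAt (fun y : ℝ => y / u) (1/u) (Ioi 0) x :=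
      fun x _ => ((hasDerivAt_id x).div_const u).hasDerivWithinAt
    have hinj : Set.InjOn (fun y : ℝ => y / u) (Ioi 0) :=
      fun x _ z _ h => by field_simp at h; exact h
    nth_rewrite 1 [← himg]
    rw [_root_.lintegral_image_eq_lintegral_abs_deriv_mul measurableSet_Ioi hderiv hinj]
    apply setLIntegral_congr_fun measurableSet_Ioi
    refine fun y hy => ?_
    have h1 : u * (y / u) = y := by field_simp
    rw [abs_of_pos (by positivity : (0:ℝ) < 1/u)]
    congr 2
    by_cases h : y ∈ s <;> simp [Set.indicator, Set.mem_preimage, h1, h]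
  rw [setLIntegral_congr_fun measurableSet_Ioo (fun u hu => by rw [hG u hu])]
  -- pull the beta density inside the inner integral
  have hpull : ∀ u : ℝ,
      ENNReal.ofReal (u ^ (a-1) * (1-u) ^ (b-1) * Gamma (a+b) / (Gamma a * Gamma b))
        * ∫⁻ y in Ioi 0, ENNReal.ofReal (1/u)
            * (s.indicator (fun _ => (1:ENNReal)) y * gammaPDF (a+b) r (y/u))
      = ∫⁻ y in Ioi 0,
          ENNReal.ofReal (u ^ (a-1) * (1-u) ^ (b-1) * Gamma (a+b) / (Gamma a * Gamma b))
            * (ENNReal.ofReal (1/u)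
              * (s.indicator (fun _ => (1:ENNReal)) y * gammaPDF (a+b) r (y/u))) :=
    fun u => (lintegral_const_mul' _ _ ENNReal.ofReal_ne_top).symm
  rw [lintegral_congr hpull]
  -- Tonelli
  have hjoint : AEMeasurable (Function.uncurry fun u y : ℝ =>
      ENNReal.ofReal (u ^ (a-1) * (1-u) ^ (b-1) * Gamma (a+b) / (Gamma a * Gamma b))
        * (ENNReal.ofReal (1/u)
          * (s.indicator (fun _ => (1:ENNReal)) y * gammaPDF (a+b) r (y/u))))
      ((volume.restrict (Ioo (0:ℝ) 1)).prod (volume.restrict (Ioi (0:ℝ)))) := by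
    apply Measurable.aemeasurable
    apply Measurable.mul (hcmeas.comp measurable_fst)
    apply Measurable.mul
    · exact ((measurable_const.div measurable_id).ennreal_ofReal).comp measurable_fst
    apply Measurable.mul
    · exact (measurable_const.indicator hs).comp measurable_snd
    · exact ((measurable_gammaPDFReal (a+b) r).ennreal_ofReal).comp
        (measurable_snd.div measurable_fst)
  rw [lintegral_lintegral_swap hjoint]
  -- rearrange and pull out the indicator
  have hre : ∀ y u : ℝ,
      ENNReal.ofReal (u ^ (a-1) * (1-u) ^ (b-1) * Gamma (a+b) / (Gamma a * Gamma b))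
        * (ENNReal.ofReal (1/u)
          * (s.indicator (fun _ => (1:ENNReal)) y * gammaPDF (a+b) r (y/u)))
      = s.indicator (fun _ => (1:ENNReal)) y
          * (ENNReal.ofReal (u ^ (a-1) * (1-u) ^ (b-1) * Gamma (a+b) / (Gamma a * Gamma b))
            * ENNReal.ofReal (1/u) * gammaPDF (a+b) r (y/u)) := fun y u => by ring
  simp_rw [hre]
  have hindne : ∀ y : ℝ, s.indicator (fun _ => (1:ENNReal)) y ≠ ⊤ := by
    intro y
    by_cases h : y ∈ s <;> simp [h]
  have hfin : ∀ y ∈ Ioi (0:ℝ),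
      ∫⁻ u in Ioo (0:ℝ) 1, s.indicator (fun _ => (1:ENNReal)) y
          * (ENNReal.ofReal (u ^ (a-1) * (1-u) ^ (b-1) * Gamma (a+b) / (Gamma a * Gamma b))
            * ENNReal.ofReal (1/u) * gammaPDF (a+b) r (y/u))
      = s.indicator (fun _ => (1:ENNReal)) y * gammaPDF a r y := by
    intro y hy
    rw [lintegral_const_mul' _ _ (hindne y), inner_integral a b r y ha hb hr hy]
  rw [setLIntegral_congr_fun measurableSet_Ioi hfin]
  exact (gammaMeasure_apply_eq a r hs).symm

/-- Beta-gamma multiplication identity: if X ~ Gamma(α, λ) and independently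
η ~ Beta(βα, (1-β)α) with 0 < β < 1, then ηX ~ Gamma(βα, λ). -/
theorem beta_gamma_product {Ω : Type*} [MeasurableSpace Ω]
    (μ : Measure Ω) [IsProbabilityMeasure μ]
    (X η : Ω → ℝ) (hX : Measurable X) (hη : Measurable η)
    (α lam β : ℝ) (hα : 0 < α) (hlam : 0 < lam) (hβ0 : 0 < β) (hβ1 : β < 1)
    (hind : IndepFun X η μ)
    (hXd : μ.map X = gammaMeasure α lam)
    (hηd : μ.map η = betaMeasure' (β * α) ((1 - β) * α)) :
    μ.map (fun ω => η ω * X ω) = gammaMeasure (β * α) lam := by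
  have ha : 0 < β * α := mul_pos hβ0 hα
  have hb : 0 < (1 - β) * α := mul_pos (by linarith) hα
  have key := beta_gamma_core (β * α) ((1 - β) * α) lam ha hb hlam
  rw [show β * α + (1 - β) * α = α by ring] at key
  have hprod : μ.map (fun ω => (η ω, X ω))
      = (betaMeasure' (β * α) ((1 - β) * α)).prod (gammaMeasure α lam) := by
    rw [← hηd, ← hXd]
    exact (indepFun_iff_map_prod_eq_prod_map_map hη.aemeasurable hX.aemeasurable).mp hind.symm
  have hcomp : μ.map (fun ω => η ω * X ω)
      = (μ.map (fun ω => (η ω, X ω))).map (fun p : ℝ × ℝ => p.1 * p.2) := by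
    rw [Measure.map_map (show Measurable (fun p : ℝ × ℝ => p.1 * p.2) from measurable_fst.mul measurable_snd) (hη.prodMk hX)]
    rfl
  rw [hcomp, hprod, key]
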